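/- Equational differential variant rule (dV=): Let f be globally Lipschitz on ℝⁿ, p polynomial, ε > 0. Suppose ∇p(y)·f(y) ≥ ε whenever p(y) < 0. Then for every initial state x₀ with p(x₀) ≤ 0, the solution φ satisfies p(φ(τ)) = 0 for some τ ≥ 0. -/

import Mathlib

open MvPolynomial

/-- Chain rule for evaluating a multivariate polynomial along a differentiable curve. -/
lemma eval_comp_hasDerivAt (n : ℕ) (x : ℝ → (Fin n → ℝ)) (v : Fin n → ℝ) (t : ℝ)
    (hx : HasDerivAt x v t) (p : MvPolynomial (Fin n) ℝ) :
    HasDerivAt (fun s => eval (x s) p)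
      (∑ i : Fin n, eval (x t) (pderiv i p) * v i) t := by
  induction p using MvPolynomial.induction_on with
  | C a =>
      simpa using hasDerivAt_const t a
  | add p q hp hq =>
      have := hp.add hq
      simpa [mul_add, add_mul, Finset.sum_add_distrib, Pi.add_def] using this
  | mul_X p i hp =>
      have hxi : HasDerivAt (fun s => x s i) (v i) t := hasDerivAt_pi.1 hx i
      have heq : (fun s => eval (x s) (p * X i)) = fun s => eval (x s) p * x s i := by
        funext s; simp
      rw [heq]
      convert (show HasDerivAt (fun s => eval (x s) p * x s i) _ t from hp.mul hxi) using 1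
      simp only [pderiv_mul, pderiv_X, map_add, map_mul, eval_X, add_mul]
      rw [Finset.sum_add_distrib]
      congr 1
      · rw [Finset.sum_mul]
        exact Finset.sum_congr rfl (fun j _ => by ring)
      · simp [Pi.single_apply, mul_comm]

/-- Equational differential variant rule dV=: if `f` is globally Lipschitz, the
Lie derivative of `p` along `f` is at least `ε > 0` wherever `p < 0`, and the
solution starts where `p ≤ 0`, then `p = 0` is reached at some finite time. -/
theorem dV_eq (n : ℕ) (f : (Fin n → ℝ) → (Fin n → ℝ)) (K : NNReal)
    (hf : LipschitzWith K f) (p : MvPolynomial (Fin n) ℝ) (ε : ℝ) (hε : 0 < ε)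
    (hlie : ∀ y : Fin n → ℝ, eval y p < 0 →
      ε ≤ ∑ i : Fin n, eval y (pderiv i p) * f y i)
    (x₀ : Fin n → ℝ) (hx₀ : eval x₀ p ≤ 0)
    (φ : ℝ → (Fin n → ℝ)) (hφ0 : φ 0 = x₀)
    (hsol : ∀ t : ℝ, 0 ≤ t → HasDerivAt φ (f (φ t)) t) :
    ∃ τ : ℝ, 0 ≤ τ ∧ eval (φ τ) p = 0 := by
  set g : ℝ → ℝ := fun t => eval (φ t) p with hg_def
  have hg : ∀ t : ℝ, 0 ≤ t → HasDerivAt g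
      (∑ i : Fin n, eval (φ t) (pderiv i p) * f (φ t) i) t :=
    fun t ht => eval_comp_hasDerivAt n φ (f (φ t)) t (hsol t ht) p
  rcases eq_or_lt_of_le hx₀ with h0 | h0
  · exact ⟨0, le_rfl, by rw [hφ0]; exact h0⟩
  · have hg0 : g 0 < 0 := by simpa [hg_def, hφ0] using h0
    set T : ℝ := (-g 0) / ε + 1 with hT_def
    have hg0' : 0 < -g 0 := by linarith
    have hT : 0 < T := by positivity
    -- First: there is t ∈ [0,T] with 0 ≤ g t
    have hcont : ContinuousOn g (Set.Icc 0 T) := fun t ht =>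
      ((hg t ht.1).continuousAt).continuousWithinAt
    by_cases hex : ∃ t ∈ Set.Icc (0:ℝ) T, 0 ≤ g t
    · obtain ⟨t, ht, hgt⟩ := hex
      have : (0:ℝ) ∈ Set.Icc (g 0) (g t) := ⟨hg0.le, hgt⟩
      obtain ⟨τ, hτmem, hτ⟩ := intermediate_value_Icc ht.1
        (hcont.mono (Set.Icc_subset_Icc le_rfl ht.2)) this
      exact ⟨τ, hτmem.1, hτ⟩
    · exfalso
      push_neg at hex
      have hneg : ∀ t ∈ Set.Icc (0:ℝ) T, g t < 0 := hex
      have hderiv : ∀ t ∈ interior (Set.Icc (0:ℝ) T), ε ≤ deriv g t := by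
        intro t ht
        rw [interior_Icc] at ht
        have h1 := hg t ht.1.le
        rw [h1.deriv]
        exact hlie (φ t) (hneg t ⟨ht.1.le, ht.2.le⟩)
      have hdiff : DifferentiableOn ℝ g (interior (Set.Icc (0:ℝ) T)) := by
        intro t ht
        rw [interior_Icc] at ht
        exact ((hg t ht.1.le).differentiableAt).differentiableWithinAt
      have key := (convex_Icc (0:ℝ) T).mul_sub_le_image_sub_of_le_deriv hcont hdiff hderiv
        0 (Set.left_mem_Icc.2 hT.le) T (Set.right_mem_Icc.2 hT.le) hT.le
      have hgT : g T < 0 := hneg T (Set.right_mem_Icc.2 hT.le)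
      have : ε * T = -g 0 + ε := by
        rw [hT_def]; field_simp
      nlinarith [key, hgT, hg0]
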